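/- Let (Π_i)_{i=1}^∞ be a family of finite posets, each Π_i having a least element 0̂_i. Fix s(1),…,s(k) ≥ 1 and set n = s(1)+…+s(k). Let α : Π_{s(1)} × … × Π_{s(k)} → Π_n be an order embedding (with the componentwise order on the product) such that for every τ ∈ Π_n there exists a (necessarily unique) element τ* ∈ Π_n with {σ ∈ range(α) : σ ≤ τ} = {σ ∈ Π_n : σ ≤ τ*}, and such that τ* = τ whenever τ ∈ range(α). Let A be an associative ring, let G be any function from the disjoint union of the Π_i to A, and define F(π) = Σ_{σ ∈ Π_i, σ ≥ π} G(σ) for π ∈ Π_i. If F(π₁)F(π₂)⋯F(π_k) = F(α(π₁,…,π_k)) for all π_i ∈ Π_{s(i)}, then G(0̂_{s(1)})G(0̂_{s(2)})⋯G(0̂_{s(k)}) = Σ_{τ ∈ Π_n : τ* = 0̂_n} G(τ). -/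

import Mathlib

open Finset
open scoped Classical

/-- Möbius-type uniqueness: if two functions on a finite poset have equal
upper sums at every point, they are equal. -/
lemma aux_upper_sum_eq {β A : Type*} [PartialOrder β] [Fintype β] [AddCommGroup A]
    (H K : β → A)
    (h : ∀ x : β, ∑ y ∈ Finset.univ.filter (fun y => x ≤ y), H y
        = ∑ y ∈ Finset.univ.filter (fun y => x ≤ y), K y) :
    ∀ x, H x = K x := by
  have key : ∀ m : ℕ, ∀ x : β,
      (Finset.univ.filter (fun y => x < y)).card = m → H x = K x := by
    intro m
    induction m using Nat.strong_induction_on with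
    | _ m ih =>
      intro x hx
      have hxnot : x ∉ Finset.univ.filter (fun y => x < y) := by simp
      have hsplit : Finset.univ.filter (fun y => x ≤ y)
          = insert x (Finset.univ.filter (fun y => x < y)) := by
        ext y
        simp only [mem_filter, mem_univ, true_and, mem_insert]
        constructor
        · intro hy
          rcases eq_or_lt_of_le hy with h' | h'
          · exact Or.inl h'.symm
          · exact Or.inr h'
        · rintro (rfl | h')
          · exact le_refl _
          · exact le_of_lt h'
      have hIH : ∀ y ∈ Finset.univ.filter (fun y => x < y), H y = K y := by
        intro y hy
        simp only [mem_filter, mem_univ, true_and] at hy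
        have hsub : Finset.univ.filter (fun w => y < w)
            ⊂ Finset.univ.filter (fun w => x < w) := by
          constructor
          · intro w hw
            simp only [mem_filter, mem_univ, true_and] at hw ⊢
            exact lt_trans hy hw
          · intro hcon
            have : y ∈ Finset.univ.filter (fun w => y < w) :=
              hcon (by simp [hy])
            simp at this
        exact ih _ (hx ▸ Finset.card_lt_card hsub) y rfl
      have h1 := h x
      rw [hsplit, Finset.sum_insert hxnot, Finset.sum_insert hxnot,
        Finset.sum_congr rfl hIH] at h1
      exact add_right_cancel h1
  intro x
  exact key _ x rfl

/-- Sum of ordered products over a product of finsets factors as the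
ordered product of sums. -/
lemma aux_sum_pi_prod {A : Type*} [Ring A] : ∀ {k : ℕ} {Q : Fin k → Type*}
    [∀ i, Fintype (Q i)] [∀ i, DecidableEq (Q i)]
    (f : ∀ i, Q i → A) (S : ∀ i, Finset (Q i)),
    ∑ x ∈ Fintype.piFinset S, (List.ofFn fun i => f i (x i)).prod
      = (List.ofFn fun i => ∑ σ ∈ S i, f i σ).prod := by
  intro k
  induction k with
  | zero =>
    intro Q _ _ f S
    simp [Fintype.piFinset, List.ofFn_zero]
  | succ k ih =>
    intro Q _ _ f S
    have hmap : Fintype.piFinset S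
        = ((S 0) ×ˢ Fintype.piFinset (Fin.tail S)).map
            (Fin.consEquiv Q).toEmbedding := by
      ext x
      simp only [Finset.mem_map, Finset.mem_product, Equiv.coe_toEmbedding,
        Fintype.mem_piFinset]
      constructor
      · intro hx
        refine ⟨(x 0, Fin.tail x), ⟨hx 0, fun i => hx _⟩, ?_⟩
        simp [Fin.consEquiv, Fin.cons_self_tail]
      · rintro ⟨⟨a, y⟩, ⟨ha, hy⟩, rfl⟩
        intro i
        refine Fin.cases ?_ ?_ i
        · simpa [Fin.consEquiv] using ha
        · intro j
          simpa [Fin.consEquiv, Fin.tail] using hy j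
    rw [hmap, Finset.sum_map, Finset.sum_product]
    simp only [Equiv.coe_toEmbedding]
    have : ∀ a ∈ S 0, ∑ y ∈ Fintype.piFinset (Fin.tail S),
        (List.ofFn fun i => f i ((Fin.consEquiv Q) (a, y) i)).prod
        = f 0 a * (List.ofFn fun i : Fin k => ∑ σ ∈ Fin.tail S i, f i.succ σ).prod := by
      intro a _
      have : ∀ y : ∀ i : Fin k, Q i.succ,
          (List.ofFn fun i => f i ((Fin.consEquiv Q) (a, y) i)).prod
          = f 0 a * (List.ofFn fun i : Fin k => f i.succ (y i)).prod := by
        intro y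
        rw [List.ofFn_succ]
        simp [Fin.consEquiv]
      rw [Finset.sum_congr rfl (fun y _ => this y), ← Finset.mul_sum,
        ih (fun i : Fin k => f i.succ) (Fin.tail S)]
    rw [Finset.sum_congr rfl this, ← Finset.sum_mul, List.ofFn_succ]
    rfl

theorem stmt0 {A : Type*} [Ring A] {P : ℕ → Type*} [∀ i, PartialOrder (P i)]
    [∀ i, Fintype (P i)] (z : ∀ i, P i) (hz : ∀ i, ∀ x : P i, z i ≤ x)
    {k : ℕ} (s : Fin k → ℕ) (hs : ∀ i, 1 ≤ s i) (n : ℕ) (hn : n = ∑ i, s i)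
    (alpha : (∀ i, P (s i)) → P n)
    (hemb : ∀ x y : ∀ i, P (s i), alpha x ≤ alpha y ↔ x ≤ y)
    (hinj : Function.Injective alpha)
    (tstar : P n → P n)
    (htstar : ∀ τ σ : P n, (σ ∈ Set.range alpha ∧ σ ≤ τ) ↔ σ ≤ tstar τ)
    (htfix : ∀ τ ∈ Set.range alpha, tstar τ = τ)
    (G : ∀ i, P i → A)
    (hmul : ∀ x : ∀ i, P (s i),
      (List.ofFn fun i =>
        ∑ σ ∈ Finset.univ.filter (fun σ : P (s i) => x i ≤ σ), G (s i) σ).prod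
      = ∑ σ ∈ Finset.univ.filter (fun σ : P n => alpha x ≤ σ), G n σ) :
    (List.ofFn fun i => G (s i) (z (s i))).prod
      = ∑ τ ∈ Finset.univ.filter (fun τ : P n => tstar τ = z n), G n τ := by
  -- tstar τ is always in the range of alpha
  have hrange : ∀ τ : P n, tstar τ ∈ Set.range alpha := by
    intro τ
    exact ((htstar τ (tstar τ)).mpr (le_refl _)).1
  -- z n is in the range of alpha
  have hzr : z n ∈ Set.range alpha := ((htstar (z n) (z n)).mpr (hz n _)).1
  -- alpha applied to the bottom of the product equals z n
  have hbot : alpha (fun i => z (s i)) = z n := by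
    rcases hzr with ⟨w, hw⟩
    have h1 : alpha (fun i => z (s i)) ≤ alpha w :=
      (hemb _ _).mpr (fun i => hz _ _)
    have h2 : z n ≤ alpha (fun i => z (s i)) := hz n _
    rw [hw] at h1
    exact le_antisymm h1 h2
  -- the retraction β
  choose β hβspec using hrange
  -- upper sums agree
  have hupper : ∀ x : ∀ i, P (s i),
      ∑ y ∈ Finset.univ.filter (fun y => x ≤ y),
        (List.ofFn fun i => G (s i) (y i)).prod
      = ∑ y ∈ Finset.univ.filter (fun y => x ≤ y),
          ∑ τ ∈ Finset.univ.filter (fun τ : P n => tstar τ = alpha y), G n τ := by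
    intro x
    have hfilt : Finset.univ.filter (fun y : ∀ i, P (s i) => x ≤ y)
        = Fintype.piFinset (fun i => Finset.univ.filter (fun σ : P (s i) => x i ≤ σ)) := by
      ext y
      simp only [mem_filter, mem_univ, true_and, Fintype.mem_piFinset]
      exact Pi.le_def ..
    have hL : ∑ y ∈ Finset.univ.filter (fun y : ∀ i, P (s i) => x ≤ y),
        (List.ofFn fun i => G (s i) (y i)).prod
        = ∑ σ ∈ Finset.univ.filter (fun σ : P n => alpha x ≤ σ), G n σ := by
      rw [hfilt, aux_sum_pi_prod (fun i => G (s i)) _]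
      exact hmul x
    have hmaps : ∀ τ ∈ Finset.univ.filter (fun σ : P n => alpha x ≤ σ),
        β τ ∈ Finset.univ.filter (fun y : ∀ i, P (s i) => x ≤ y) := by
      intro τ hτ
      simp only [mem_filter, mem_univ, true_and] at hτ ⊢
      have h1 : alpha x ≤ tstar τ := (htstar τ (alpha x)).mp ⟨⟨x, rfl⟩, hτ⟩
      rw [← hβspec τ] at h1
      exact (hemb _ _).mp h1
    have hfib := Finset.sum_fiberwise_of_maps_to hmaps (G n)
    have hfibeq : ∀ y ∈ Finset.univ.filter (fun y : ∀ i, P (s i) => x ≤ y),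
        ∑ τ ∈ (Finset.univ.filter (fun σ : P n => alpha x ≤ σ)).filter (fun τ => β τ = y),
          G n τ
        = ∑ τ ∈ Finset.univ.filter (fun τ : P n => tstar τ = alpha y), G n τ := by
      intro y hy
      simp only [mem_filter, mem_univ, true_and] at hy
      congr 1
      ext τ
      simp only [mem_filter, mem_univ, true_and]
      constructor
      · rintro ⟨hle, rfl⟩
        exact (hβspec τ).symm
      · intro hts
        have h1 : alpha y ≤ τ := ((htstar τ (alpha y)).mpr (le_of_eq hts.symm)).2
        refine ⟨le_trans ((hemb _ _).mpr hy) h1, ?_⟩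
        apply hinj
        rw [hβspec τ, hts]
    rw [← hfib, Finset.sum_congr rfl hfibeq] at hL
    exact hL
  have hfin := aux_upper_sum_eq _ _ hupper (fun i => z (s i))
  simp only at hfin
  rw [hfin, hbot]
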